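/- Let n ≥ 3 be an integer, set a := 2^{1/(n−1)} + 1 and γ₁ := (1 − n + √(n² + 6n − 7))/2, and fix constants c ≥ 0 and B ≥ 0. There exists a constant C, depending only on n, c and B, with the following property: for every R ≥ a + 1, every α > 0, and every twice differentiable f : [a, R] → ℝ satisfying r²·f''(r) + n·r·f'(r) − 2(n−1)·f(r) = φ(r) on [a, R], where |φ(r)| ≤ α·((r/R)^{0.1} + r^{−0.1}) + c·r^{1−n}, and satisfying |f(r)| ≤ B for all r ∈ [a, a+1], one has |f(r)| ≤ C·(|f(R)|·(r/R)^{γ₁} + α·(r/R)^{0.1} + α·r^{−0.1} + r^{1−n}) for all r ∈ [a, R]. In particular |f(r)| ≤ C·(|f(R)| + α + r^{1−n}). -/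

import Mathlib

open Set Filter Topology

/-- At an interior minimum of a C² function, the second derivative is nonnegative. -/
lemma secondDeriv_nonneg_at_min {a R : ℝ} {w w' : ℝ → ℝ} {w2 r₀ : ℝ}
    (hr₀ : r₀ ∈ Set.Ioo a R)
    (hw : ∀ r ∈ Set.Icc a R, HasDerivWithinAt w (w' r) (Set.Icc a R) r)
    (hw' : HasDerivAt w' w2 r₀)
    (hz : w' r₀ = 0)
    (hmin : IsMinOn w (Set.Icc a R) r₀) : 0 ≤ w2 := by
  by_contra hneg
  push_neg at hneg
  have hslope : Tendsto (slope w' r₀) (𝓝[>] r₀) (𝓝 w2) :=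
    (hasDerivAt_iff_tendsto_slope.mp hw').mono_left
      (nhdsWithin_mono _ (fun x hx => ne_of_gt hx))
  have hev : ∀ᶠ x in 𝓝[>] r₀, slope w' r₀ x < 0 :=
    hslope.eventually (Filter.Tendsto.eventually_lt_const hneg tendsto_id) |>.mono (fun x hx => hx)
  have hfreq : ∃ᶠ x in 𝓝[>] r₀, 0 ≤ slope w' r₀ x := by
    rw [Filter.frequently_iff]
    intro U hU
    obtain ⟨u, hu, hsub⟩ := mem_nhdsGT_iff_exists_Ioo_subset.mp hU
    rw [Set.mem_Ioi] at hu
    set t := min ((r₀ + u) / 2) R with ht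
    have h1 : r₀ < t := lt_min (by linarith) hr₀.2
    have htR : t ≤ R := min_le_right _ _
    have htu : t < u := lt_of_le_of_lt (min_le_left _ _) (by linarith)
    have hsubIcc : Set.Icc r₀ t ⊆ Set.Icc a R := Set.Icc_subset_Icc hr₀.1.le htR
    have hcont : ContinuousOn w (Set.Icc r₀ t) := fun x hx =>
      ((hw x (hsubIcc hx)).continuousWithinAt).mono hsubIcc
    have hderiv : ∀ x ∈ Set.Ioo r₀ t, HasDerivAt w (w' x) x := fun x hx => by
      have hxI : x ∈ Set.Icc a R := hsubIcc ⟨hx.1.le, hx.2.le⟩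
      exact (hw x hxI).hasDerivAt (Icc_mem_nhds (lt_of_le_of_lt hr₀.1.le hx.1 |>.trans_le le_rfl) (lt_of_lt_of_le hx.2 htR))
    obtain ⟨ξ, hξ, hξeq⟩ := exists_hasDerivAt_eq_slope w w' h1 hcont hderiv
    refine ⟨ξ, hsub ⟨hξ.1, hξ.2.trans htu⟩, ?_⟩
    have hwt : w r₀ ≤ w t := hmin ⟨hr₀.1.le.trans h1.le, htR⟩
    have hξpos : 0 < ξ - r₀ := by linarith [hξ.1]
    have : 0 ≤ w' ξ := hξeq ▸ div_nonneg (by linarith) (by linarith [h1])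
    rw [slope_def_field, hz]
    simp only [sub_zero]
    exact div_nonneg this hξpos.le
  obtain ⟨x, hx1, hx2⟩ := (hfreq.and_eventually hev).exists
  linarith

/-- Maximum principle for `r² w'' + K₁ r w' - K w ≤ 0` on `[a,R]`. -/
lemma max_principle {a R K K₁ : ℝ} (haR : a < R) (hK : 0 < K)
    {w w' w'' : ℝ → ℝ}
    (hw : ∀ r ∈ Set.Icc a R, HasDerivWithinAt w (w' r) (Set.Icc a R) r)
    (hw' : ∀ r ∈ Set.Icc a R, HasDerivWithinAt w' (w'' r) (Set.Icc a R) r)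
    (hL : ∀ r ∈ Set.Ioo a R, r ^ 2 * w'' r + K₁ * r * w' r - K * w r ≤ 0)
    (hwa : 0 ≤ w a) (hwR : 0 ≤ w R) :
    ∀ r ∈ Set.Icc a R, 0 ≤ w r := by
  have hcont : ContinuousOn w (Set.Icc a R) := fun r hr => (hw r hr).continuousWithinAt
  obtain ⟨r₀, hr₀, hmin⟩ := isCompact_Icc.exists_isMinOn ⟨a, Set.left_mem_Icc.mpr haR.le⟩ hcont
  intro r hr
  refine le_trans ?_ (hmin hr)
  by_contra hneg
  push_neg at hneg
  have hne_a : r₀ ≠ a := fun h => by rw [h] at hneg; linarith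
  have hne_R : r₀ ≠ R := fun h => by rw [h] at hneg; linarith
  have hIoo : r₀ ∈ Set.Ioo a R := ⟨lt_of_le_of_ne hr₀.1 (Ne.symm hne_a), lt_of_le_of_ne hr₀.2 hne_R⟩
  have hmem : Set.Icc a R ∈ 𝓝 r₀ := Icc_mem_nhds hIoo.1 hIoo.2
  have hDA : HasDerivAt w (w' r₀) r₀ := (hw r₀ hr₀).hasDerivAt hmem
  have hDA' : HasDerivAt w' (w'' r₀) r₀ := (hw' r₀ hr₀).hasDerivAt hmem
  have hloc : IsLocalMin w r₀ := hmin.isLocalMin hmem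
  have hz : w' r₀ = 0 := hloc.hasDerivAt_eq_zero hDA
  have h2 : 0 ≤ w'' r₀ := secondDeriv_nonneg_at_min hIoo hw hDA' hz hmin
  have := hL r₀ hIoo
  rw [hz] at this
  have hr₀pos : (0:ℝ) ≤ r₀ ^ 2 := sq_nonneg _
  nlinarith

set_option maxHeartbeats 1600000 in
theorem apriori_estimate_radial (n : ℕ) (hn : 3 ≤ n) (a γ₁ : ℝ)
    (ha : a = (2 : ℝ) ^ ((1 : ℝ) / ((n : ℝ) - 1)) + 1)
    (hγ₁ : γ₁ = (1 - (n : ℝ) + Real.sqrt ((n : ℝ) ^ 2 + 6 * (n : ℝ) - 7)) / 2)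
    (c B : ℝ) (hc : 0 ≤ c) (hB : 0 ≤ B) :
    ∃ C : ℝ, ∀ R : ℝ, a + 1 ≤ R → ∀ α : ℝ, 0 < α →
      ∀ f f' f'' φ : ℝ → ℝ,
      (∀ r ∈ Set.Icc a R, HasDerivWithinAt f (f' r) (Set.Icc a R) r) →
      (∀ r ∈ Set.Icc a R, HasDerivWithinAt f' (f'' r) (Set.Icc a R) r) →
      (∀ r ∈ Set.Icc a R,
        r ^ 2 * f'' r + (n : ℝ) * r * f' r - 2 * ((n : ℝ) - 1) * f r = φ r) →
      (∀ r ∈ Set.Icc a R,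
        |φ r| ≤ α * ((r / R) ^ (0.1 : ℝ) + r ^ (-0.1 : ℝ)) + c * r ^ (1 - (n : ℝ))) →
      (∀ r ∈ Set.Icc a (a + 1), |f r| ≤ B) →
      ∀ r ∈ Set.Icc a R,
        |f r| ≤ C * (|f R| * (r / R) ^ γ₁ + α * (r / R) ^ (0.1 : ℝ)
            + α * r ^ (-0.1 : ℝ) + r ^ (1 - (n : ℝ)))
        ∧ |f r| ≤ C * (|f R| + α + r ^ (1 - (n : ℝ))) := by
  set N : ℝ := (n : ℝ) with hN
  clear_value N
  have hN3 : (3:ℝ) ≤ N := by rw [hN]; exact_mod_cast hn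
  -- basic facts about a
  have ha2 : 2 < a := by
    rw [ha]
    have : (1:ℝ) < 2 ^ ((1 : ℝ) / (N - 1)) := by
      rw [Real.one_lt_rpow_iff_of_pos (by norm_num)]
      exact Or.inl ⟨by norm_num, div_pos one_pos (by linarith)⟩
    linarith
  have ha0 : 0 < a := by linarith
  -- facts about γ₁
  have hD : (0:ℝ) ≤ N ^ 2 + 6 * N - 7 := by nlinarith
  have hsq : Real.sqrt (N ^ 2 + 6 * N - 7) ^ 2 = N ^ 2 + 6 * N - 7 := Real.sq_sqrt hD
  have hγnn : 0 ≤ γ₁ := by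
    rw [hγ₁]
    have : N - 1 ≤ Real.sqrt (N ^ 2 + 6 * N - 7) := by
      rw [show N - 1 = Real.sqrt ((N-1)^2) from (Real.sqrt_sq (by linarith)).symm]
      exact Real.sqrt_le_sqrt (by nlinarith)
    linarith
  have hQγ : γ₁ * (γ₁ - 1) + N * γ₁ - 2 * (N - 1) = 0 := by
    rw [hγ₁]; nlinarith [hsq]
  -- the constant
  set C₁ : ℝ := 1 + c + B * a ^ (N - 1) with hC₁def
  have hapow : (0:ℝ) < a ^ (N - 1) := Real.rpow_pos_of_pos ha0 _
  clear_value C₁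
  have hC₁1 : 1 ≤ C₁ := by nlinarith
  have hC₁c : c ≤ C₁ := by nlinarith
  have t2 : C₁ * ((0.1:ℝ) * (0.1 - 1) + N * 0.1 - 2 * (N - 1)) ≤ -1 := by nlinarith
  have t3 : C₁ * ((-0.1:ℝ) * (-0.1 - 1) + N * (-0.1) - 2 * (N - 1)) ≤ -1 := by nlinarith
  have t4 : C₁ * ((1 - N) * (1 - N - 1) + N * (1 - N) - 2 * (N - 1)) ≤ -c := by nlinarith
  refine ⟨2 * C₁, ?_⟩
  intro R hRa α hα f f' f'' φ hf hf' heq hφ hfB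
  have haR : a < R := by linarith
  have hR0 : 0 < R := by linarith
  set K : ℝ := |f R| with hK
  have hK0 : 0 ≤ K := abs_nonneg _
  set A1 : ℝ := K / R ^ γ₁ with hA1
  set A2 : ℝ := α / R ^ (0.1:ℝ) with hA2
  have hRγ : (0:ℝ) < R ^ γ₁ := Real.rpow_pos_of_pos hR0 _
  have hR01 : (0:ℝ) < R ^ (0.1:ℝ) := Real.rpow_pos_of_pos hR0 _
  have hA1nn : 0 ≤ A1 := div_nonneg hK0 hRγ.le
  have hA2nn : 0 ≤ A2 := div_nonneg hα.le hR01.le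
  clear_value K A1 A2
  -- the barrier and its derivatives
  set v : ℝ → ℝ := fun r => C₁ * (A1 * r ^ γ₁ + A2 * r ^ (0.1:ℝ) + α * r ^ (-0.1:ℝ) + r ^ (1 - N)) with hv_def
  set v' : ℝ → ℝ := fun r => C₁ * (A1 * (γ₁ * r ^ (γ₁ - 1)) + A2 * (0.1 * r ^ ((0.1:ℝ) - 1))
      + α * ((-0.1) * r ^ ((-0.1:ℝ) - 1)) + (1 - N) * r ^ (1 - N - 1)) with hv'_def
  set v'' : ℝ → ℝ := fun r => C₁ * (A1 * (γ₁ * ((γ₁ - 1) * r ^ (γ₁ - 1 - 1)))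
      + A2 * (0.1 * ((0.1 - 1) * r ^ ((0.1:ℝ) - 1 - 1)))
      + α * ((-0.1) * ((-0.1 - 1) * r ^ ((-0.1:ℝ) - 1 - 1)))
      + (1 - N) * ((1 - N - 1) * r ^ (1 - N - 1 - 1))) with hv''_def
  have hrpos : ∀ r ∈ Set.Icc a R, 0 < r := fun r hr => lt_of_lt_of_le ha0 hr.1
  have hv : ∀ r ∈ Set.Icc a R, HasDerivAt v (v' r) r := by
    intro r hr
    have hne : r ≠ 0 := (hrpos r hr).ne'
    have d1 : HasDerivAt (fun x : ℝ => x ^ γ₁) (γ₁ * r ^ (γ₁ - 1)) r :=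
      Real.hasDerivAt_rpow_const (Or.inl hne)
    have d2 : HasDerivAt (fun x : ℝ => x ^ (0.1:ℝ)) ((0.1:ℝ) * r ^ ((0.1:ℝ) - 1)) r :=
      Real.hasDerivAt_rpow_const (Or.inl hne)
    have d3 : HasDerivAt (fun x : ℝ => x ^ (-0.1:ℝ)) ((-0.1:ℝ) * r ^ ((-0.1:ℝ) - 1)) r :=
      Real.hasDerivAt_rpow_const (Or.inl hne)
    have d4 : HasDerivAt (fun x : ℝ => x ^ (1 - N)) ((1 - N) * r ^ (1 - N - 1)) r :=
      Real.hasDerivAt_rpow_const (Or.inl hne)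
    exact ((((d1.const_mul A1).add (d2.const_mul A2)).add (d3.const_mul α)).add d4).const_mul C₁
  have hv' : ∀ r ∈ Set.Icc a R, HasDerivAt v' (v'' r) r := by
    intro r hr
    have hne : r ≠ 0 := (hrpos r hr).ne'
    have d1 : HasDerivAt (fun x : ℝ => x ^ (γ₁ - 1)) ((γ₁ - 1) * r ^ (γ₁ - 1 - 1)) r :=
      Real.hasDerivAt_rpow_const (Or.inl hne)
    have d2 : HasDerivAt (fun x : ℝ => x ^ ((0.1:ℝ) - 1)) (((0.1:ℝ) - 1) * r ^ ((0.1:ℝ) - 1 - 1)) r :=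
      Real.hasDerivAt_rpow_const (Or.inl hne)
    have d3 : HasDerivAt (fun x : ℝ => x ^ ((-0.1:ℝ) - 1)) (((-0.1:ℝ) - 1) * r ^ ((-0.1:ℝ) - 1 - 1)) r :=
      Real.hasDerivAt_rpow_const (Or.inl hne)
    have d4 : HasDerivAt (fun x : ℝ => x ^ (1 - N - 1)) ((1 - N - 1) * r ^ (1 - N - 1 - 1)) r :=
      Real.hasDerivAt_rpow_const (Or.inl hne)
    exact (((((d1.const_mul γ₁).const_mul A1).add
        ((d2.const_mul (0.1:ℝ)).const_mul A2)).add
        ((d3.const_mul (-0.1:ℝ)).const_mul α)).add (d4.const_mul (1 - N))).const_mul C₁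
  clear_value v v' v''
  -- key computation of L v
  have key : ∀ r ∈ Set.Icc a R, r ^ 2 * v'' r + N * r * v' r - 2 * (N - 1) * v r
      = C₁ * (A1 * ((γ₁ * (γ₁ - 1) + N * γ₁ - 2 * (N - 1)) * r ^ γ₁)
        + A2 * ((0.1 * (0.1 - 1) + N * 0.1 - 2 * (N - 1)) * r ^ (0.1:ℝ))
        + α * (((-0.1) * (-0.1 - 1) + N * (-0.1) - 2 * (N - 1)) * r ^ (-0.1:ℝ))
        + ((1 - N) * (1 - N - 1) + N * (1 - N) - 2 * (N - 1)) * r ^ (1 - N)) := by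
    intro r hr
    have hr0 : 0 < r := hrpos r hr
    have hA : ∀ p : ℝ, r ^ 2 * r ^ (p - 1 - 1) = r ^ p := by
      intro p
      rw [← Real.rpow_natCast r 2, ← Real.rpow_add hr0]
      congr 1; push_cast; ring
    have hBp : ∀ p : ℝ, r * r ^ (p - 1) = r ^ p := by
      intro p
      nth_rewrite 1 [← Real.rpow_one r]
      rw [← Real.rpow_add hr0]
      congr 1; ring
    simp only [hv_def, hv'_def, hv''_def]
    linear_combination (C₁ * A1 * γ₁ * (γ₁ - 1)) * hA γ₁ + (C₁ * N * A1 * γ₁) * hBp γ₁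
      + (C₁ * A2 * 0.1 * (0.1 - 1)) * hA (0.1:ℝ) + (C₁ * N * A2 * 0.1) * hBp (0.1:ℝ)
      + (C₁ * α * (-0.1) * (-0.1 - 1)) * hA (-0.1:ℝ) + (C₁ * N * α * (-0.1)) * hBp (-0.1:ℝ)
      + (C₁ * (1 - N) * (1 - N - 1)) * hA (1 - N) + (C₁ * N * (1 - N)) * hBp (1 - N)
  -- bound on L v
  have hdivγ : ∀ r, 0 ≤ r → (r / R) ^ γ₁ = r ^ γ₁ / R ^ γ₁ :=
    fun r hr => Real.div_rpow hr hR0.le _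
  have hdiv1 : ∀ r, 0 ≤ r → (r / R) ^ (0.1:ℝ) = r ^ (0.1:ℝ) / R ^ (0.1:ℝ) :=
    fun r hr => Real.div_rpow hr hR0.le _
  have hLv : ∀ r ∈ Set.Icc a R, r ^ 2 * v'' r + N * r * v' r - 2 * (N - 1) * v r
      ≤ -(A2 * r ^ (0.1:ℝ) + α * r ^ (-0.1:ℝ) + c * r ^ (1 - N)) := by
    intro r hr
    have hr0 : 0 < r := hrpos r hr
    have hp1 : (0:ℝ) ≤ r ^ γ₁ := (Real.rpow_pos_of_pos hr0 _).le
    have hp2 : (0:ℝ) ≤ r ^ (0.1:ℝ) := (Real.rpow_pos_of_pos hr0 _).le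
    have hp3 : (0:ℝ) ≤ r ^ (-0.1:ℝ) := (Real.rpow_pos_of_pos hr0 _).le
    have hp4 : (0:ℝ) ≤ r ^ (1 - N) := (Real.rpow_pos_of_pos hr0 _).le
    rw [key r hr]
    have u2 := mul_le_mul_of_nonneg_right t2 (mul_nonneg hA2nn hp2)
    have u3 := mul_le_mul_of_nonneg_right t3 (mul_nonneg hα.le hp3)
    have u4 := mul_le_mul_of_nonneg_right t4 hp4
    have zγ : C₁ * (A1 * ((γ₁ * (γ₁ - 1) + N * γ₁ - 2 * (N - 1)) * r ^ γ₁)) = 0 := by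
      rw [hQγ]; ring
    linarith only [zγ, u2, u3, u4]
  -- the comparison: for both signs ε = ±1, w := v + ε f satisfies the max principle
  have hvw : ∀ r ∈ Set.Icc a R, HasDerivWithinAt v (v' r) (Set.Icc a R) r :=
    fun r hr => (hv r hr).hasDerivWithinAt
  have hvw' : ∀ r ∈ Set.Icc a R, HasDerivWithinAt v' (v'' r) (Set.Icc a R) r :=
    fun r hr => (hv' r hr).hasDerivWithinAt
  -- boundary values
  have hva : B ≤ v a := by
    have h1 : a ^ (N - 1) * a ^ (1 - N) = 1 := by
      rw [← Real.rpow_add ha0]; norm_num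
    have hpa1 : (0:ℝ) ≤ a ^ γ₁ := (Real.rpow_pos_of_pos ha0 _).le
    have hpa2 : (0:ℝ) ≤ a ^ (0.1:ℝ) := (Real.rpow_pos_of_pos ha0 _).le
    have hpa3 : (0:ℝ) ≤ a ^ (-0.1:ℝ) := (Real.rpow_pos_of_pos ha0 _).le
    have hpa4 : (0:ℝ) ≤ a ^ (1 - N) := (Real.rpow_pos_of_pos ha0 _).le
    have hC₁0 : (0:ℝ) ≤ C₁ := by linarith
    have hexp : C₁ * a ^ (1 - N) = a ^ (1 - N) + c * a ^ (1 - N) + B * (a ^ (N - 1) * a ^ (1 - N)) := by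
      rw [hC₁def]; ring
    rw [h1, mul_one] at hexp
    have m4 : B ≤ C₁ * a ^ (1 - N) := by
      linarith only [hexp, hpa4, mul_nonneg hc hpa4]
    simp only [hv_def]
    have m1 := mul_nonneg (mul_nonneg hC₁0 hA1nn) hpa1
    have m2 := mul_nonneg (mul_nonneg hC₁0 hA2nn) hpa2
    have m3 := mul_nonneg (mul_nonneg hC₁0 hα.le) hpa3
    linarith only [m1, m2, m3, m4]
  have hvR : K ≤ v R := by
    have h1 : A1 * R ^ γ₁ = K := by rw [hA1]; exact div_mul_cancel₀ _ hRγ.ne'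
    have hpa2 : (0:ℝ) ≤ R ^ (0.1:ℝ) := hR01.le
    have hpa3 : (0:ℝ) ≤ R ^ (-0.1:ℝ) := (Real.rpow_pos_of_pos hR0 _).le
    have hpa4 : (0:ℝ) ≤ R ^ (1 - N) := (Real.rpow_pos_of_pos hR0 _).le
    have hC₁0 : (0:ℝ) ≤ C₁ := by linarith
    simp only [hv_def]
    have e : C₁ * (A1 * R ^ γ₁ + A2 * R ^ (0.1:ℝ) + α * R ^ (-0.1:ℝ) + R ^ (1 - N))
        = C₁ * K + (C₁ * (A2 * R ^ (0.1:ℝ)) + C₁ * (α * R ^ (-0.1:ℝ)) + C₁ * R ^ (1 - N)) := by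
      rw [h1]; ring
    have m0 : 0 ≤ K * (C₁ - 1) := mul_nonneg hK0 (by linarith)
    have m2 := mul_nonneg (mul_nonneg hC₁0 hA2nn) hpa2
    have m3 := mul_nonneg (mul_nonneg hC₁0 hα.le) hpa3
    have m4 := mul_nonneg hC₁0 hpa4
    linarith only [e, m0, m2, m3, m4]
  have hfa : |f a| ≤ B := hfB a ⟨le_refl a, by linarith⟩
  have habs : ∀ r ∈ Set.Icc a R, |φ r| ≤ A2 * r ^ (0.1:ℝ) + α * r ^ (-0.1:ℝ) + c * r ^ (1 - N) := by
    intro r hr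
    have := hφ r hr
    rw [hdiv1 r (hrpos r hr).le] at this
    have : |φ r| ≤ α * (r ^ (0.1:ℝ) / R ^ (0.1:ℝ)) + α * r ^ (-0.1:ℝ) + c * r ^ (1 - N) := by
      linarith [this]
    calc |φ r| ≤ α * (r ^ (0.1:ℝ) / R ^ (0.1:ℝ)) + α * r ^ (-0.1:ℝ) + c * r ^ (1 - N) := this
      _ = A2 * r ^ (0.1:ℝ) + α * r ^ (-0.1:ℝ) + c * r ^ (1 - N) := by rw [hA2]; ring
  have hcomp : ∀ r ∈ Set.Icc a R, |f r| ≤ v r := by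
    have hKpos : (0:ℝ) < 2 * (N - 1) := by linarith
    have hminus : ∀ r ∈ Set.Icc a R, 0 ≤ v r - f r := by
      apply max_principle haR hKpos
        (fun r hr => (hvw r hr).sub (hf r hr))
        (fun r hr => (hvw' r hr).sub (hf' r hr))
      · intro r hrIoo
        have hr : r ∈ Set.Icc a R := ⟨hrIoo.1.le, hrIoo.2.le⟩
        have h1 := hLv r hr
        have h2 := heq r hr
        have h3 := habs r hr
        have h4 : -|φ r| ≤ φ r := neg_abs_le _
        have e : r ^ 2 * (v'' r - f'' r) + N * r * (v' r - f' r) - 2 * (N - 1) * (v r - f r)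
            = (r ^ 2 * v'' r + N * r * v' r - 2 * (N - 1) * v r)
              - (r ^ 2 * f'' r + N * r * f' r - 2 * (N - 1) * f r) := by ring
        show r ^ 2 * (v'' r - f'' r) + N * r * (v' r - f' r) - 2 * (N - 1) * (v r - f r) ≤ 0
        rw [e, h2]
        linarith only [h1, h3, h4]
      · show 0 ≤ v a - f a; have := abs_le.mp hfa; linarith [this.2]
      · show 0 ≤ v R - f R; have : f R ≤ |f R| := le_abs_self _
        rw [← hK] at this; linarith
    have hplus : ∀ r ∈ Set.Icc a R, 0 ≤ v r + f r := by
      apply max_principle haR hKpos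
        (fun r hr => (hvw r hr).add (hf r hr))
        (fun r hr => (hvw' r hr).add (hf' r hr))
      · intro r hrIoo
        have hr : r ∈ Set.Icc a R := ⟨hrIoo.1.le, hrIoo.2.le⟩
        have h1 := hLv r hr
        have h2 := heq r hr
        have h3 := habs r hr
        have h4 : φ r ≤ |φ r| := le_abs_self _
        have e : r ^ 2 * (v'' r + f'' r) + N * r * (v' r + f' r) - 2 * (N - 1) * (v r + f r)
            = (r ^ 2 * v'' r + N * r * v' r - 2 * (N - 1) * v r)
              + (r ^ 2 * f'' r + N * r * f' r - 2 * (N - 1) * f r) := by ring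
        show r ^ 2 * (v'' r + f'' r) + N * r * (v' r + f' r) - 2 * (N - 1) * (v r + f r) ≤ 0
        rw [e, h2]
        linarith only [h1, h3, h4]
      · show 0 ≤ v a + f a; have := abs_le.mp hfa; linarith [this.1]
      · show 0 ≤ v R + f R; have : -|f R| ≤ f R := neg_abs_le _
        rw [← hK] at this; linarith
    intro r hr
    exact abs_le.mpr ⟨by linarith [hplus r hr], by linarith [hminus r hr]⟩
  -- conclusion
  intro r hr
  have hr0 : 0 < r := hrpos r hr
  have hvS : v r = C₁ * (K * (r / R) ^ γ₁ + α * (r / R) ^ (0.1:ℝ)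
      + α * r ^ (-0.1:ℝ) + r ^ (1 - N)) := by
    rw [hv_def]
    simp only
    rw [hdivγ r hr0.le, hdiv1 r hr0.le, hA1, hA2]
    ring
  have hSnn : 0 ≤ K * (r / R) ^ γ₁ + α * (r / R) ^ (0.1:ℝ) + α * r ^ (-0.1:ℝ) + r ^ (1 - N) := by
    have h1 : (0:ℝ) ≤ (r / R) ^ γ₁ := Real.rpow_nonneg (by positivity) _
    have h2 : (0:ℝ) ≤ (r / R) ^ (0.1:ℝ) := Real.rpow_nonneg (by positivity) _
    have h3 : (0:ℝ) ≤ r ^ (-0.1:ℝ) := (Real.rpow_pos_of_pos hr0 _).le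
    have h4 : (0:ℝ) ≤ r ^ (1 - N) := (Real.rpow_pos_of_pos hr0 _).le
    linarith only [mul_nonneg hK0 h1, mul_nonneg hα.le h2, mul_nonneg hα.le h3, h4]
  have hfv := hcomp r hr
  rw [hvS] at hfv
  have hC₁0 : 0 ≤ C₁ := by linarith

  constructor
  · calc |f r| ≤ C₁ * (K * (r / R) ^ γ₁ + α * (r / R) ^ (0.1:ℝ)
        + α * r ^ (-0.1:ℝ) + r ^ (1 - N)) := hfv
      _ ≤ 2 * C₁ * (K * (r / R) ^ γ₁ + α * (r / R) ^ (0.1:ℝ)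
        + α * r ^ (-0.1:ℝ) + r ^ (1 - N)) := by
          linarith only [mul_nonneg hC₁0 hSnn]
  · have hrR : r / R ≤ 1 := div_le_one_of_le₀ hr.2 hR0.le
    have hrR0 : 0 ≤ r / R := by positivity
    have e1 : (r / R) ^ γ₁ ≤ 1 := Real.rpow_le_one hrR0 hrR hγnn
    have e2 : (r / R) ^ (0.1:ℝ) ≤ 1 := Real.rpow_le_one hrR0 hrR (by norm_num)
    have e3 : r ^ (-0.1:ℝ) ≤ 1 :=
      Real.rpow_le_one_of_one_le_of_nonpos (by linarith [hr.1]) (by norm_num)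
    have h4 : (0:ℝ) ≤ r ^ (1 - N) := (Real.rpow_pos_of_pos hr0 _).le
    have h1 : (0:ℝ) ≤ (r / R) ^ γ₁ := Real.rpow_nonneg hrR0 _
    calc |f r| ≤ C₁ * (K * (r / R) ^ γ₁ + α * (r / R) ^ (0.1:ℝ)
        + α * r ^ (-0.1:ℝ) + r ^ (1 - N)) := hfv
      _ ≤ 2 * C₁ * (K + α + r ^ (1 - N)) := by
          have q1 := mul_le_mul_of_nonneg_left (mul_le_of_le_one_right hK0 e1) hC₁0
          have q2 := mul_le_mul_of_nonneg_left (mul_le_of_le_one_right hα.le e2) hC₁0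
          have q3 := mul_le_mul_of_nonneg_left (mul_le_of_le_one_right hα.le e3) hC₁0
          linarith only [q1, q2, q3, mul_nonneg hC₁0 hK0, mul_nonneg hC₁0 h4,
            mul_nonneg hC₁0 hα.le]
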